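/- Let w > 0, a ∈ ℝ, φ ∈ (0,1), k ≥ 2 an integer, and q₁ < ⋯ < q_{k−1} real thresholds. For b ∈ ℝ define I₂(b) := ∑_{l=1}^{k} [ η(φ·p_l(a) + (1−φ)·p_l(b)) − φ·η(p_l(a)) − (1−φ)·η(p_l(b)) ], where p_l(x) = Q(q_{l−1} − w·x) − Q(q_l − w·x) with conventions Q(q₀ − w·x) := 1 and Q(q_k − w·x) := 0. Then I₂(b) converges, as b → ∞, to f_φ(Q(q_{k−1} − w·a)). -/
import Mathlib

open MeasureTheory Real Filter

/-- The standard Gaussian tail function `Q(x) = ∫_x^∞ (2π)^{-1/2} e^{-u²/2} du`. -/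
noncomputable def gaussQ (x : ℝ) : ℝ :=
  ∫ u in Set.Ioi x, (Real.sqrt (2 * Real.pi))⁻¹ * Real.exp (-u ^ 2 / 2)

/-- `η(t) = -t log t` (with `η(0) = 0`, automatic since `Real.log 0 = 0`). -/
noncomputable def eta (t : ℝ) : ℝ := -t * Real.log t

/-- The binary entropy function `h(p) = -p log p - (1-p) log (1-p)`. -/
noncomputable def binEnt (p : ℝ) : ℝ := eta p + eta (1 - p)

/-- `f_φ(p) = h(φ(1-p)) - φ·h(p)`. -/
noncomputable def fphi (φ p : ℝ) : ℝ := binEnt (φ * (1 - p)) - φ * binEnt p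

/-- Boundary-extended Gaussian tail for a `k`-point ADC with thresholds `q`. -/
noncomputable def Qb (k : ℕ) (q : ℕ → ℝ) (t : ℝ) (l : ℕ) : ℝ :=
  if l = 0 then 1 else if l = k then 0 else gaussQ (q l - t)

/-- `p_l(x)` with `t = w·x`: `p_l = Q(q_{l-1} - t) - Q(q_l - t)`. -/
noncomputable def adcP (k : ℕ) (q : ℕ → ℝ) (t : ℝ) (l : ℕ) : ℝ :=
  Qb k q t (l - 1) - Qb k q t l

/-- Binary-input mutual information of the real Gaussian channel with gain `w`
followed by a `k`-point ADC with thresholds `q`, inputs `x₁` w.p. `φ`, `x₂` w.p. `1-φ`. -/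
noncomputable def miADC (w : ℝ) (k : ℕ) (q : ℕ → ℝ) (φ x₁ x₂ : ℝ) : ℝ :=
  ∑ l ∈ Finset.Icc 1 k,
    (eta (φ * adcP k q (w * x₁) l + (1 - φ) * adcP k q (w * x₂) l)
      - φ * eta (adcP k q (w * x₁) l) - (1 - φ) * eta (adcP k q (w * x₂) l))

/- ### Auxiliary lemmas -/

lemma gpdf_integrable :
    Integrable (fun u : ℝ => (Real.sqrt (2 * Real.pi))⁻¹ * Real.exp (-u ^ 2 / 2)) := by
  have h : ∀ u : ℝ, -u ^ 2 / 2 = -(1 / 2 : ℝ) * u ^ 2 := fun u => by ring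
  simp only [h]
  exact (integrable_exp_neg_mul_sq (by norm_num : (0:ℝ) < 1/2)).const_mul _

lemma gpdf_nonneg (u : ℝ) : 0 ≤ (Real.sqrt (2 * Real.pi))⁻¹ * Real.exp (-u ^ 2 / 2) := by
  positivity

lemma gpdf_integral : (∫ u : ℝ, (Real.sqrt (2 * Real.pi))⁻¹ * Real.exp (-u ^ 2 / 2)) = 1 := by
  have h : ∀ u : ℝ, -u ^ 2 / 2 = -(1 / 2 : ℝ) * u ^ 2 := fun u => by ring
  simp only [h]
  rw [integral_const_mul, integral_gaussian]
  rw [show (Real.pi / (1/2 : ℝ)) = 2 * Real.pi by ring]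
  exact inv_mul_cancel₀ (Real.sqrt_ne_zero'.2 (by positivity))

lemma gaussQ_nonneg (x : ℝ) : 0 ≤ gaussQ x :=
  setIntegral_nonneg measurableSet_Ioi fun u _ => gpdf_nonneg u

lemma gaussQ_anti : Antitone gaussQ := by
  intro x y hxy
  exact setIntegral_mono_set gpdf_integrable.integrableOn
    (Filter.Eventually.of_forall fun u => gpdf_nonneg u)
    (HasSubset.Subset.eventuallyLE (Set.Ioi_subset_Ioi hxy))

lemma gaussQ_le_one (x : ℝ) : gaussQ x ≤ 1 := by
  rw [← gpdf_integral]
  exact setIntegral_le_integral gpdf_integrable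
    (Filter.Eventually.of_forall fun u => gpdf_nonneg u)

lemma gaussQ_tendsto_atBot : Tendsto gaussQ atBot (nhds 1) := by
  have hU : (⋃ y : ℝ, Set.Ioi (-y)) = Set.univ := by
    apply Set.eq_univ_of_forall
    intro x
    refine Set.mem_iUnion.2 ⟨1 - x, ?_⟩
    simp only [Set.mem_Ioi]
    linarith
  have h1 : Tendsto (fun y : ℝ => gaussQ (-y)) atTop (nhds 1) := by
    have := tendsto_setIntegral_of_monotone (μ := volume)
      (f := fun u : ℝ => (Real.sqrt (2 * Real.pi))⁻¹ * Real.exp (-u ^ 2 / 2))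
      (s := fun y : ℝ => Set.Ioi (-y))
      (fun y => measurableSet_Ioi)
      (fun y y' h => Set.Ioi_subset_Ioi (neg_le_neg h))
      (by rw [hU]; exact gpdf_integrable.integrableOn)
    rw [hU, setIntegral_univ, gpdf_integral] at this
    exact this
  have := h1.comp tendsto_neg_atBot_atTop
  simpa [Function.comp_def] using this

lemma eta_continuous : Continuous eta := by
  have h : eta = fun t => -(t * Real.log t) := by funext t; simp [eta, neg_mul]
  rw [h]
  exact Real.continuous_mul_log.neg

lemma eta_zero : eta 0 = 0 := by simp [eta]

lemma eta_one : eta 1 = 0 := by simp [eta]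

lemma eta_mul (x y : ℝ) (hx : 0 ≤ x) (hy : 0 ≤ y) :
    eta (x * y) = x * eta y + y * eta x := by
  rcases eq_or_lt_of_le hx with h | h
  · simp [← h, eta]
  rcases eq_or_lt_of_le hy with h' | h'
  · simp [← h', eta]
  simp only [eta, Real.log_mul h.ne' h'.ne']
  ring

lemma Qb_tendsto (w : ℝ) (hw : 0 < w) (k m : ℕ) (q : ℕ → ℝ) (hm : m < k) :
    Tendsto (fun b : ℝ => Qb k q (w * b) m) atTop (nhds 1) := by
  rcases eq_or_ne m 0 with rfl | h0
  · simp only [Qb, if_pos rfl]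
    exact tendsto_const_nhds
  · simp only [Qb, if_neg h0, if_neg hm.ne]
    have hmul : Tendsto (fun b : ℝ => w * b) atTop atTop :=
      Tendsto.const_mul_atTop hw tendsto_id
    have hneg : Tendsto (fun b : ℝ => -(w * b)) atTop atBot :=
      tendsto_neg_atTop_atBot.comp hmul
    have harg : Tendsto (fun b : ℝ => q m - w * b) atTop atBot := by
      simpa [sub_eq_add_neg] using tendsto_atBot_add_const_left atTop (q m) hneg
    exact gaussQ_tendsto_atBot.comp harg

/-- As `b → ∞`, the `k`-point-ADC binary-input mutual information `I₂(b)` with inputs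
`a` (w.p. `φ`) and `b` (w.p. `1-φ`) converges to `f_φ(Q(q_{k-1} - w·a))`. -/
theorem miADC_tendsto (w a φ : ℝ) (hw : 0 < w) (hφ : φ ∈ Set.Ioo (0 : ℝ) 1)
    (k : ℕ) (hk : 2 ≤ k) (q : ℕ → ℝ)
    (hq : ∀ l : ℕ, 1 ≤ l → l + 1 ≤ k - 1 → q l < q (l + 1)) :
    Tendsto (fun b : ℝ => miADC w k q φ a b) atTop
      (nhds (fphi φ (gaussQ (q (k - 1) - w * a)))) := by
  obtain ⟨hφ0, hφ1⟩ := hφ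
  obtain ⟨m, rfl⟩ : ∃ m, k = m + 2 := ⟨k - 2, by omega⟩
  set t := w * a with ht
  set P : ℕ → ℝ := adcP (m + 2) q t with hP
  set e : ℕ → ℝ := fun l => if l = m + 2 then 1 else 0 with he
  set L : ℕ → ℝ := fun l =>
    eta (φ * P l + (1 - φ) * e l) - φ * eta (P l) - (1 - φ) * eta (e l) with hL
  -- per-term limits
  have hA : ∀ l ∈ Finset.Icc 1 (m + 2),
      Tendsto (fun b : ℝ => adcP (m + 2) q (w * b) l) atTop (nhds (e l)) := by
    intro l hl
    simp only [Finset.mem_Icc] at hl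
    rcases eq_or_ne l (m + 2) with rfl | hne
    · have h1 := Qb_tendsto w hw (m + 2) (m + 1) q (by omega)
      have h2 : (fun b : ℝ => Qb (m + 2) q (w * b) (m + 2)) = fun _ => (0 : ℝ) := by
        funext b; simp [Qb]
      have : Tendsto (fun b : ℝ => adcP (m + 2) q (w * b) (m + 2)) atTop (nhds (1 - 0)) := by
        simp only [adcP, Nat.add_sub_cancel]
        exact h1.sub (by rw [h2]; exact tendsto_const_nhds)
      simpa [he] using this
    · have h1 := Qb_tendsto w hw (m + 2) (l - 1) q (by omega)
      have h2 := Qb_tendsto w hw (m + 2) l q (by omega)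
      have : Tendsto (fun b : ℝ => adcP (m + 2) q (w * b) l) atTop (nhds (1 - 1)) :=
        h1.sub h2
      simpa [he, hne] using this
  have hterm : ∀ l ∈ Finset.Icc 1 (m + 2),
      Tendsto (fun b : ℝ =>
        eta (φ * adcP (m + 2) q (w * a) l + (1 - φ) * adcP (m + 2) q (w * b) l)
          - φ * eta (adcP (m + 2) q (w * a) l)
          - (1 - φ) * eta (adcP (m + 2) q (w * b) l)) atTop (nhds (L l)) := by
    intro l hl
    have h1 : Tendsto (fun b : ℝ => φ * P l + (1 - φ) * adcP (m + 2) q (w * b) l)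
        atTop (nhds (φ * P l + (1 - φ) * e l)) :=
      tendsto_const_nhds.add ((hA l hl).const_mul _)
    have h2 : Tendsto (fun b : ℝ =>
        eta (φ * P l + (1 - φ) * adcP (m + 2) q (w * b) l)) atTop
        (nhds (eta (φ * P l + (1 - φ) * e l))) :=
      (eta_continuous.tendsto _).comp h1
    have h3 : Tendsto (fun b : ℝ => eta (adcP (m + 2) q (w * b) l)) atTop
        (nhds (eta (e l))) := (eta_continuous.tendsto _).comp (hA l hl)
    exact (h2.sub tendsto_const_nhds).sub (h3.const_mul _)
  have hsum : Tendsto (fun b : ℝ => miADC w (m + 2) q φ a b) atTop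
      (nhds (∑ l ∈ Finset.Icc 1 (m + 2), L l)) := by
    unfold miADC
    exact tendsto_finset_sum _ hterm
  -- it remains: ∑ L = fphi φ (gaussQ (q (m+1) - t))
  have hPnonneg : ∀ l, 1 ≤ l → l ≤ m + 1 → 0 ≤ P l := by
    intro l h1 h2
    have hQb1 : Qb (m + 2) q t l ≤ Qb (m + 2) q t (l - 1) := by
      rcases eq_or_ne l 1 with rfl | hne
      · have e0 : Qb (m + 2) q t (1 - 1) = 1 := by simp [Qb]
        have e1 : Qb (m + 2) q t 1 = gaussQ (q 1 - t) := by
          simp only [Qb]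
          rw [if_neg (by omega : (1 : ℕ) ≠ 0), if_neg (by omega : 1 ≠ m + 2)]
        rw [e0, e1]
        exact gaussQ_le_one _
      · have hl1 : 1 ≤ l - 1 := by omega
        have : q (l - 1) < q (l - 1 + 1) := hq (l - 1) hl1 (by omega)
        rw [Nat.sub_add_cancel h1] at this
        simp only [Qb, if_neg (by omega : l ≠ 0), if_neg (by omega : l ≠ m + 2),
          if_neg (by omega : l - 1 ≠ 0), if_neg (by omega : l - 1 ≠ m + 2)]
        exact gaussQ_anti (by linarith)
    simpa [hP, adcP] using sub_nonneg.2 hQb1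
  set Pk : ℝ := gaussQ (q (m + 1) - t) with hPk
  have hQbtop : Qb (m + 2) q t (m + 2) = 0 := by simp [Qb]
  have hQbpen : Qb (m + 2) q t (m + 1) = gaussQ (q (m + 1) - t) := by
    simp only [Qb]
    rw [if_neg (by omega : m + 1 ≠ 0), if_neg (by omega : m + 1 ≠ m + 2)]
  have hPktop : P (m + 2) = Pk := by
    show Qb (m + 2) q t (m + 2 - 1) - Qb (m + 2) q t (m + 2) = Pk
    rw [show m + 2 - 1 = m + 1 from rfl, hQbpen, hQbtop, hPk]
    ring
  have hPk0 : 0 ≤ Pk := gaussQ_nonneg _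
  have hPk1 : Pk ≤ 1 := gaussQ_le_one _
  -- telescoping sum of P over Icc 1 (m+1)
  have htel : ∑ l ∈ Finset.Icc 1 (m + 1), P l = 1 - Pk := by
    rw [← Finset.Ico_add_one_right_eq_Icc, Finset.sum_Ico_eq_sum_range]
    have hcg : ∀ i ∈ Finset.range (m + 1 + 1 - 1),
        P (1 + i) = Qb (m + 2) q t i - Qb (m + 2) q t (i + 1) := by
      intro i _
      show Qb (m + 2) q t (1 + i - 1) - Qb (m + 2) q t (1 + i) = _
      congr 2 <;> omega
    rw [Finset.sum_congr rfl hcg, Finset.sum_range_sub' (fun i => Qb (m + 2) q t i)]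
    have h0 : Qb (m + 2) q t 0 = 1 := by simp [Qb]
    rw [h0, show m + 1 + 1 - 1 = m + 1 from rfl, hQbpen, hPk]
  -- value of L on [1, m+1]
  have hLlow : ∀ l ∈ Finset.Icc 1 (m + 1), L l = P l * eta φ := by
    intro l hl
    simp only [Finset.mem_Icc] at hl
    have hne : l ≠ m + 2 := by omega
    have hel : e l = 0 := by simp [he, hne]
    have := eta_mul φ (P l) hφ0.le (hPnonneg l hl.1 hl.2)
    simp only [hL, hel, mul_zero, add_zero, eta_zero]
    linarith
  have hLtop : L (m + 2) = eta (φ * Pk + (1 - φ)) - φ * eta Pk := by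
    simp [hL, he, hPktop, eta_one]
  -- compute the sum of limits
  have hval : ∑ l ∈ Finset.Icc 1 (m + 2), L l = fphi φ Pk := by
    rw [show m + 2 = m + 1 + 1 from rfl, Finset.sum_Icc_succ_top (by omega),
      Finset.sum_congr rfl hLlow, ← Finset.sum_mul, htel,
      show m + 1 + 1 = m + 2 from rfl, hLtop]
    have h1 : eta (φ * (1 - Pk)) = φ * eta (1 - Pk) + (1 - Pk) * eta φ :=
      eta_mul φ (1 - Pk) hφ0.le (by linarith)
    have h2 : (1 : ℝ) - φ * (1 - Pk) = φ * Pk + (1 - φ) := by ring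
    simp only [fphi, binEnt, h1, h2]
    ring
  exact hval ▸ hsum
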